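/- Let $I=(t^{v_1},\dots,t^{v_q})$ be a monomial ideal of $S=K[t_1,\dots,t_s]$ and let $\mathcal{A}' = \{e_1,\dots,e_s\}\cup\{(v_1,1),\dots,(v_q,1)\}\subset\mathbb{R}^{s+1}$. Then $I$ is normal if and only if $\mathbb{R}_+\mathcal{A}'\cap\mathbb{Z}^{s+1} = \mathbb{N}\mathcal{A}'$, i.e., $\mathcal{A}'$ is a Hilbert basis. -/

import Mathlib

open MvPolynomial

/-- The monomial `t^a` in `K[t_1,…,t_s]`. -/
noncomputable def mono (K : Type*) [Field K] {s : ℕ} (a : Fin s → ℕ) :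
    MvPolynomial (Fin s) K :=
  MvPolynomial.monomial (Finsupp.equivFunOnFinite.symm a) 1

/-- The monomial ideal generated by the monomials `t^{v i}`. -/
noncomputable def monIdeal (K : Type*) [Field K] {s q : ℕ} (v : Fin q → Fin s → ℕ) :
    Ideal (MvPolynomial (Fin s) K) :=
  Ideal.span (Set.range fun i => mono K (v i))

/-- The integral closure of a monomial ideal `J`: the ideal generated by the
monomials `t^a` such that `(t^a)^p ∈ J^p` for some `p ≥ 1`. -/
noncomputable def intCl {K : Type*} [Field K] {s : ℕ}
    (J : Ideal (MvPolynomial (Fin s) K)) : Ideal (MvPolynomial (Fin s) K) :=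
  Ideal.span {m | (∃ a : Fin s → ℕ, m = mono K a) ∧ ∃ p : ℕ, 1 ≤ p ∧ m ^ p ∈ J ^ p}

/-- A monomial ideal is normal if `I^n` is integrally closed for all `n ≥ 1`. -/
def IsNormalIdeal {K : Type*} [Field K] {s : ℕ}
    (I : Ideal (MvPolynomial (Fin s) K)) : Prop :=
  ∀ n : ℕ, 1 ≤ n → intCl (I ^ n) = I ^ n

/-- The vectors of the set `𝒜' = {e_1,…,e_s} ∪ {(v_1,1),…,(v_q,1)}` in `ℤ^{s+1}`. -/
def reesGens {s q : ℕ} (v : Fin q → Fin s → ℕ) : (Fin s ⊕ Fin q) → Fin (s + 1) → ℤ :=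
  Sum.elim
    (fun i k => if (k : ℕ) = (i : ℕ) then 1 else 0)
    (fun j k => if h : (k : ℕ) < s then (v j ⟨k, h⟩ : ℤ) else 1)

open Pointwise

lemma ratSpan {ι : Type*} [Fintype ι] {k : ℕ} (w : ι → Fin k → ℚ) (x : Fin k → ℚ)
    (h : (fun i => (x i : ℝ)) ∈
        Submodule.span ℝ (Set.range fun j => (fun i => ((w j i : ℚ) : ℝ)))) :
    x ∈ Submodule.span ℚ (Set.range w) := by
  by_contra hx
  set V := Submodule.span ℚ (Set.range w) with hV
  have hq : V.mkQ x ≠ 0 := by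
    simpa [Submodule.mkQ_apply, Submodule.Quotient.mk_eq_zero] using hx
  obtain ⟨φ, hφ⟩ : ∃ φ : Module.Dual ℚ ((Fin k → ℚ) ⧸ V), φ (V.mkQ x) ≠ 0 := by
    by_contra h'; push_neg at h'
    exact hq ((Module.forall_dual_apply_eq_zero_iff ℚ _).mp h')
  set f : (Fin k → ℚ) →ₗ[ℚ] ℚ := φ.comp V.mkQ with hfdef
  have hfw : ∀ j, f (w j) = 0 := by
    intro j
    have hwj : w j ∈ V := Submodule.subset_span ⟨j, rfl⟩
    have : V.mkQ (w j) = 0 := by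
      simpa [Submodule.mkQ_apply, Submodule.Quotient.mk_eq_zero] using hwj
    simp [hfdef, this]
  have hfx : f x ≠ 0 := hφ
  set u : Fin k → ℚ := fun i => f (fun j => if i = j then 1 else 0) with hu
  have hf : ∀ y : Fin k → ℚ, f y = ∑ i, y i * u i := by
    intro y
    rw [LinearMap.pi_apply_eq_sum_univ f y]
    simp [hu, smul_eq_mul]
  set F : (Fin k → ℝ) →ₗ[ℝ] ℝ := ∑ i, (u i : ℝ) • (LinearMap.proj i) with hFdef
  have hF : ∀ y : Fin k → ℝ, F y = ∑ i, y i * (u i : ℝ) := by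
    intro y
    simp [hFdef, LinearMap.sum_apply, LinearMap.proj_apply, mul_comm]
  have hker : Submodule.span ℝ (Set.range fun j => (fun i => ((w j i : ℚ) : ℝ)))
      ≤ LinearMap.ker F := by
    rw [Submodule.span_le]
    rintro _ ⟨j, rfl⟩
    have h0 : (∑ i, w j i * u i) = 0 := by rw [← hf]; exact hfw j
    simp only [SetLike.mem_coe, LinearMap.mem_ker]
    rw [hF]
    have : (∑ i, ((w j i : ℚ):ℝ) * ((u i : ℚ):ℝ)) = ((∑ i, w j i * u i : ℚ) : ℝ) := by
      push_cast; rfl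
    rw [this, h0, Rat.cast_zero]
  have hx0 : F (fun i => (x i : ℝ)) = 0 := hker h
  apply hfx
  have : ((f x : ℚ) : ℝ) = 0 := by
    rw [hf, ← hx0, hF]; push_cast; rfl
  exact_mod_cast this

lemma coneCaratheodory {ι : Type*} [Fintype ι] [DecidableEq ι] {k : ℕ} (w : ι → Fin k → ℝ) :
    ∀ (N : ℕ) (μ : ι → ℝ), (Finset.univ.filter (fun j => μ j ≠ 0)).card ≤ N →
      (∀ j, 0 ≤ μ j) →
      ∃ ν : ι → ℝ, (∀ j, 0 ≤ ν j) ∧ (∑ j, ν j • w j = ∑ j, μ j • w j) ∧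
        LinearIndependent ℝ (fun j : {j // ν j ≠ 0} => w j) := by
  intro N
  induction N with
  | zero =>
    intro μ hcard hμ
    refine ⟨μ, hμ, rfl, ?_⟩
    have hz : ∀ j, μ j = 0 := by
      intro j
      by_contra hj
      have hmem : j ∈ Finset.univ.filter (fun j => μ j ≠ 0) := by simp [hj]
      have := Finset.card_pos.mpr ⟨j, hmem⟩
      omega
    have : IsEmpty {j // μ j ≠ 0} := ⟨fun ⟨j, hj⟩ => hj (hz j)⟩
    exact linearIndependent_empty_type
  | succ N ih =>
    intro μ hcard hμ
    by_cases hli : LinearIndependent ℝ (fun j : {j // μ j ≠ 0} => w j)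
    · exact ⟨μ, hμ, rfl, hli⟩
    obtain ⟨g0, hg0sum, j0, hj0⟩ := Fintype.not_linearIndependent_iff.mp hli
    obtain ⟨g, hgsum, j1, hj1⟩ :
        ∃ g : {j // μ j ≠ 0} → ℝ, (∑ j, g j • w j = 0) ∧ ∃ j, 0 < g j := by
      rcases lt_or_gt_of_ne hj0 with hneg | hpos
      · refine ⟨-g0, ?_, j0, by simpa using hneg⟩
        simp only [Pi.neg_apply, neg_smul, Finset.sum_neg_distrib, hg0sum, neg_zero]
      · exact ⟨g0, hg0sum, j0, hpos⟩
    -- extend g to all of ι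
    set d : ι → ℝ := fun j => if h : μ j ≠ 0 then g ⟨j, h⟩ else 0 with hd
    have hdsum : ∑ j, d j • w j = 0 := by
      rw [← Finset.sum_filter_of_ne (p := fun j => μ j ≠ 0)
        (by intro j _ hne; by_contra h0; simp [hd, h0] at hne)]
      rw [Finset.sum_subtype (p := fun j => μ j ≠ 0) _ (by intro j; simp) (fun j => d j • w j)]
      rw [← hgsum]
      apply Finset.sum_congr rfl
      intro j _
      simp [hd, j.2]
    have hdj1 : 0 < d j1.1 := by simpa [hd, j1.2] using hj1
    -- the minimizing index
    set S : Finset ι := Finset.univ.filter (fun j => 0 < d j) with hS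
    have hSne : S.Nonempty := ⟨j1.1, by simp [hS, hdj1]⟩
    obtain ⟨m, hmS, hmin⟩ := S.exists_min_image (fun j => μ j / d j) hSne
    have hdm : 0 < d m := by simpa [hS] using hmS
    set t : ℝ := μ m / d m with ht
    have ht0 : 0 ≤ t := div_nonneg (hμ m) hdm.le
    set ν : ι → ℝ := fun j => μ j - t * d j with hν
    have hν0 : ∀ j, 0 ≤ ν j := by
      intro j
      rcases le_or_gt (d j) 0 with hle | hpos
      · have : t * d j ≤ 0 := mul_nonpos_of_nonneg_of_nonpos ht0 hle
        simp only [hν]; linarith [hμ j]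
      · have hjS : j ∈ S := by simp [hS, hpos]
        have := hmin j hjS
        have : t * d j ≤ μ j := by
          rw [ht]
          rw [div_le_div_iff₀ hdm hpos] at this
          calc μ m / d m * d j = μ m * d j / d m := by ring
          _ ≤ μ j := by rw [div_le_iff₀ hdm]; linarith
        simp only [hν]; linarith
    have hνm : ν m = 0 := by
      simp only [hν, ht]
      field_simp
      ring
    have hμm : μ m ≠ 0 := by
      intro h0
      have : d m = 0 := by simp [hd, h0]
      exact hdm.ne' this
    have hsub : Finset.univ.filter (fun j => ν j ≠ 0) ⊆
        (Finset.univ.filter (fun j => μ j ≠ 0)).erase m := by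
      intro j hj
      simp only [Finset.mem_filter, Finset.mem_univ, true_and] at hj
      have hμj : μ j ≠ 0 := by
        intro h0
        have hd0 : d j = 0 := by simp [hd, h0]
        apply hj
        simp [hν, h0, hd0]
      have hjm : j ≠ m := by
        intro h; rw [h] at hj; exact hj hνm
      exact Finset.mem_erase.mpr ⟨hjm, by simp [hμj]⟩
    have hcard' : (Finset.univ.filter (fun j => ν j ≠ 0)).card ≤ N := by
      have h1 := Finset.card_le_card hsub
      have hmmem : m ∈ Finset.univ.filter (fun j => μ j ≠ 0) := by simp [hμm]
      have h2 := Finset.card_erase_of_mem hmmem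
      have h3 := Finset.card_pos.mpr ⟨m, hmmem⟩
      omega
    have hνsum : ∑ j, ν j • w j = ∑ j, μ j • w j := by
      simp only [hν, sub_smul, Finset.sum_sub_distrib, mul_smul]
      rw [← Finset.smul_sum, hdsum, smul_zero, sub_zero]
    obtain ⟨ν', h1, h2, h3⟩ := ih ν hcard' hν0
    exact ⟨ν', h1, h2.trans hνsum, h3⟩

lemma sum_support_subtype {ι : Type*} [Fintype ι] [DecidableEq ι] {M : Type*} [AddCommMonoid M]
    (ν : ι → ℝ) (f : ι → M) (hf : ∀ j, ν j = 0 → f j = 0) :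
    ∑ j, f j = ∑ j : {j // ν j ≠ 0}, f j.1 := by
  rw [← Finset.sum_filter_of_ne (p := fun j => ν j ≠ 0)
    (by intro j _ hne; by_contra h0; exact hne (hf j h0))]
  rw [Finset.sum_subtype (p := fun j => ν j ≠ 0) _ (by intro j; simp) f]

lemma exists_nat_mul_rat (p : ℕ) (r : ℚ) (h0 : 0 ≤ r) (hd : r.den ∣ p) :
    ∃ c : ℕ, (c : ℚ) = p * r := by
  obtain ⟨t, rfl⟩ := hd
  refine ⟨t * r.num.toNat, ?_⟩
  have hnum : ((r.num.toNat : ℕ) : ℚ) = (r.num : ℚ) := by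
    exact_mod_cast congrArg (fun z : ℤ => (z : ℚ)) (Int.toNat_of_nonneg (Rat.num_nonneg.mpr h0))
  have hden : (r.den : ℚ) * r = (r.num : ℚ) := by rw [mul_comm, Rat.mul_den_eq_num]
  push_cast
  rw [hnum, show (r.den:ℚ) * (t:ℚ) * r = (t:ℚ) * ((r.den:ℚ) * r) by ring, hden]

lemma ratSolve {ι : Type*} [Fintype ι] [DecidableEq ι] {k : ℕ} (w : ι → Fin k → ℤ)
    (x : Fin k → ℤ) (μ : ι → ℝ) (h0 : ∀ j, 0 ≤ μ j)
    (hx : ∀ i, (x i : ℝ) = ∑ j, μ j * (w j i : ℝ)) :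
    ∃ p : ℕ, 1 ≤ p ∧ ∃ c : ι → ℕ, ∀ i, (p : ℤ) * x i = ∑ j, (c j : ℤ) * w j i := by
  classical
  set W : ι → Fin k → ℝ := fun j i => (w j i : ℝ) with hW
  have hX : (fun i => (x i : ℝ)) = ∑ j, μ j • W j := by
    funext i
    simp only [Finset.sum_apply, Pi.smul_apply, smul_eq_mul, hW]
    exact hx i
  obtain ⟨ν, hν0, hνsum, hνli⟩ := coneCaratheodory W _ μ le_rfl h0
  have hXν : (fun i => (x i : ℝ)) = ∑ j, ν j • W j := by rw [hX, hνsum]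
  set wQ : {j // ν j ≠ 0} → Fin k → ℚ := fun j i => (w j.1 i : ℚ) with hwQ
  set xQ : Fin k → ℚ := fun i => (x i : ℚ) with hxQ
  have hcastW : ∀ j : {j // ν j ≠ 0}, (fun i => ((wQ j i : ℚ) : ℝ)) = W j.1 := by
    intro j; funext i; simp [hwQ, hW]
  have hTsum : ∑ j : {j // ν j ≠ 0}, ν j.1 • W j.1 = fun i => (x i : ℝ) := by
    rw [← sum_support_subtype ν (fun j => ν j • W j) (by intro j hj; simp [hj]), ← hXν]
  have hmem : (fun i => ((xQ i : ℚ) : ℝ)) ∈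
      Submodule.span ℝ (Set.range fun j : {j // ν j ≠ 0} => (fun i => ((wQ j i : ℚ) : ℝ))) := by
    apply (Submodule.mem_span_range_iff_exists_fun ℝ).mpr
    refine ⟨fun j => ν j.1, ?_⟩
    calc ∑ j : {j // ν j ≠ 0}, ν j.1 • (fun i => ((wQ j i : ℚ) : ℝ))
        = ∑ j : {j // ν j ≠ 0}, ν j.1 • W j.1 := by
          apply Finset.sum_congr rfl; intro j _; rw [hcastW]
      _ = fun i => ((xQ i : ℚ) : ℝ) := by rw [hTsum]; funext i; simp [hxQ]
  have hxQmem : xQ ∈ Submodule.span ℚ (Set.range wQ) := ratSpan wQ xQ hmem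
  obtain ⟨cQ, hcQ⟩ := (Submodule.mem_span_range_iff_exists_fun ℚ).mp hxQmem
  have hcast : ∑ j : {j // ν j ≠ 0}, ((cQ j : ℚ):ℝ) • W j.1 = fun i => (x i : ℝ) := by
    funext i
    have h1 := congrFun hcQ i
    simp only [Finset.sum_apply, Pi.smul_apply, smul_eq_mul] at h1 ⊢
    have h2 : ((∑ j : {j // ν j ≠ 0}, cQ j * wQ j i : ℚ) : ℝ) = ((xQ i : ℚ):ℝ) := by
      exact_mod_cast h1
    push_cast at h2
    simpa [hwQ, hxQ, hW] using h2
  have heq : ∀ j : {j // ν j ≠ 0}, ((cQ j : ℚ) : ℝ) = ν j.1 := by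
    have hli := Fintype.linearIndependent_iff.mp hνli (fun j => ((cQ j : ℚ):ℝ) - ν j.1) ?_
    · intro j
      have := hli j
      have := sub_eq_zero.mp this
      exact this
    · simp only [sub_smul, Finset.sum_sub_distrib]
      rw [hcast, hTsum, sub_self]
  have hcQ0 : ∀ j : {j // ν j ≠ 0}, 0 ≤ cQ j := by
    intro j
    have h1 : (0:ℝ) ≤ ((cQ j : ℚ) : ℝ) := by rw [heq j]; exact hν0 j.1
    exact_mod_cast h1
  set μQ : ι → ℚ := fun j => if h : ν j ≠ 0 then cQ ⟨j, h⟩ else 0 with hμQ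
  have hμQ0 : ∀ j, 0 ≤ μQ j := by
    intro j
    by_cases h : ν j ≠ 0
    · simpa [hμQ, h] using hcQ0 ⟨j, h⟩
    · simp [hμQ, not_not.mp h]
  have hμQsum : ∀ i, (x i : ℚ) = ∑ j, μQ j * (w j i : ℚ) := by
    intro i
    rw [sum_support_subtype ν (fun j => μQ j * (w j i : ℚ))
      (by intro j hj; simp [hμQ, hj])]
    have h1 := congrFun hcQ i
    simp only [Finset.sum_apply, Pi.smul_apply, smul_eq_mul] at h1
    rw [show (x i : ℚ) = xQ i from rfl, ← h1]
    apply Finset.sum_congr rfl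
    intro j _
    simp [hμQ, j.2, hwQ]
  set p : ℕ := ∏ j, (μQ j).den with hp
  have hp1 : 1 ≤ p := by
    rw [hp]
    exact Nat.one_le_iff_ne_zero.mpr (Finset.prod_ne_zero_iff.mpr fun j _ => (μQ j).den_nz)
  have hc : ∀ j, ∃ c : ℕ, (c : ℚ) = p * μQ j := fun j =>
    exists_nat_mul_rat p (μQ j) (hμQ0 j) (Finset.dvd_prod_of_mem _ (Finset.mem_univ j))
  choose c hcspec using hc
  refine ⟨p, hp1, c, ?_⟩
  intro i
  have hfin : ((p:ℤ) * x i : ℚ) = ((∑ j, (c j:ℤ) * w j i : ℤ) : ℚ) := by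
    push_cast
    rw [hμQsum i, Finset.mul_sum]
    apply Finset.sum_congr rfl
    intro j _
    rw [hcspec j]
    ring
  exact_mod_cast hfin

def wsum {s q : ℕ} (v : Fin q → Fin s → ℕ) (c : Fin q → ℕ) : Fin s → ℕ :=
  fun i => ∑ j, c j * v j i

section IdealPart

variable (K : Type*) [Field K] {s q : ℕ} (v : Fin q → Fin s → ℕ)

lemma symm_apply {s : ℕ} (a : Fin s → ℕ) (i : Fin s) :
    (Finsupp.equivFunOnFinite.symm a) i = a i := rfl

lemma mono_mul (a b : Fin s → ℕ) : mono K a * mono K b = mono K (fun i => a i + b i) := by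
  unfold mono
  rw [MvPolynomial.monomial_mul, one_mul]
  have hd : Finsupp.equivFunOnFinite.symm a + Finsupp.equivFunOnFinite.symm b
      = Finsupp.equivFunOnFinite.symm (fun i => a i + b i) := by
    ext i; simp [symm_apply, Finsupp.add_apply]
  rw [hd]

lemma mono_pow (a : Fin s → ℕ) (e : ℕ) : (mono K a) ^ e = mono K (fun i => e * a i) := by
  unfold mono
  rw [MvPolynomial.monomial_pow, one_pow]
  have hd : e • Finsupp.equivFunOnFinite.symm a
      = Finsupp.equivFunOnFinite.symm (fun i => e * a i) := by
    ext i; simp [symm_apply, Finsupp.smul_apply]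
  rw [hd]

lemma mono_zero : mono K (fun _ : Fin s => 0) = 1 := by
  unfold mono
  have : Finsupp.equivFunOnFinite.symm (fun _ : Fin s => (0:ℕ)) = 0 := by ext i; rfl
  rw [this, ← MvPolynomial.C_apply, MvPolynomial.C_1]

lemma prod_mono_pow (t : Finset (Fin q)) (c : Fin q → ℕ) :
    (∏ j ∈ t, (mono K (v j)) ^ (c j)) = mono K (fun i => ∑ j ∈ t, c j * v j i) := by
  classical
  induction t using Finset.induction_on with
  | empty => simpa using (mono_zero K).symm
  | @insert j t' h ih =>
    rw [Finset.prod_insert h, ih, mono_pow, mono_mul]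
    congr 1
    funext i
    rw [Finset.sum_insert h]

lemma prod_pow_mem {R : Type*} [CommRing R] (I : Ideal R) (x : Fin q → R)
    (hx : ∀ j, x j ∈ I) (c : Fin q → ℕ) (t : Finset (Fin q)) :
    (∏ j ∈ t, x j ^ c j) ∈ I ^ (∑ j ∈ t, c j) := by
  classical
  induction t using Finset.induction_on with
  | empty => simp [Ideal.one_eq_top]
  | @insert j t' h ih =>
    rw [Finset.prod_insert h, Finset.sum_insert h, pow_add]
    exact Ideal.mul_mem_mul (Ideal.pow_mem_pow (hx j) _) ih

lemma monIdeal_pow_eq (n : ℕ) :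
    (monIdeal K v) ^ n = Ideal.span ((fun d => MvPolynomial.monomial d (1:K)) ''
      {d | ∃ c : Fin q → ℕ, (∑ j, c j) = n ∧
        d = Finsupp.equivFunOnFinite.symm (wsum v c)}) := by
  classical
  apply le_antisymm
  · have hsub : ∀ n : ℕ, (Set.range fun i => mono K (v i)) ^ n ⊆
        (fun d => MvPolynomial.monomial d (1:K)) '' {d | ∃ c : Fin q → ℕ, (∑ j, c j) = n ∧
          d = Finsupp.equivFunOnFinite.symm (wsum v c)} := by
      intro n
      induction n with
      | zero =>
        intro m hm
        rw [pow_zero, Set.mem_one] at hm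
        subst hm
        refine ⟨Finsupp.equivFunOnFinite.symm (wsum v 0), ⟨0, by simp, rfl⟩, ?_⟩
        have : wsum v 0 = fun _ => 0 := by funext i; simp [wsum]
        rw [this]
        exact mono_zero K
      | succ n ih =>
        intro m hm
        rw [pow_succ, Set.mem_mul] at hm
        obtain ⟨m1, hm1, m2, hm2, rfl⟩ := hm
        obtain ⟨d, ⟨c, hc, rfl⟩, rfl⟩ := ih hm1
        obtain ⟨j, rfl⟩ := hm2
        refine ⟨Finsupp.equivFunOnFinite.symm (wsum v (c + Pi.single j 1)),
          ⟨c + Pi.single j 1, ?_, rfl⟩, ?_⟩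
        · simp only [Pi.add_apply]
          rw [Finset.sum_add_distrib, hc]
          simp [Pi.single_apply]
        · show MvPolynomial.monomial _ 1 = (MvPolynomial.monomial _ 1) * mono K (v j)
          show MvPolynomial.monomial _ 1 = mono K (wsum v c) * mono K (v j)
          rw [mono_mul]
          show mono K _ = _
          congr 1
          funext i
          simp only [wsum, Pi.add_apply, Finset.sum_add_distrib, add_mul]
          congr 1
          simp [Pi.single_apply, ite_mul]
    rw [monIdeal]
    rw [Ideal.span, Submodule.span_pow]
    exact Submodule.span_le.mpr fun m hm => Submodule.subset_span (hsub n hm)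
  · rw [Ideal.span_le]
    rintro _ ⟨d, ⟨c, hc, rfl⟩, rfl⟩
    show mono K (wsum v c) ∈ (monIdeal K v ^ n : Ideal (MvPolynomial (Fin s) K))
    rw [← hc]
    have h2 : mono K (wsum v c) = ∏ j, (mono K (v j)) ^ (c j) := by
      rw [prod_mono_pow]
      rfl
    rw [h2]
    exact prod_pow_mem _ _ (fun j => Ideal.subset_span (Set.mem_range_self j)) c Finset.univ

lemma mono_mem_pow_iff (a : Fin s → ℕ) (n : ℕ) :
    mono K a ∈ (monIdeal K v) ^ n ↔
      ∃ c : Fin q → ℕ, (∑ j, c j) = n ∧ ∀ i, wsum v c i ≤ a i := by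
  classical
  rw [monIdeal_pow_eq, mono, MvPolynomial.mem_ideal_span_monomial_image]
  have hsupp : (MvPolynomial.monomial (Finsupp.equivFunOnFinite.symm a) (1:K)).support
      = {Finsupp.equivFunOnFinite.symm a} := by
    rw [MvPolynomial.support_monomial]
    simp
  rw [hsupp]
  constructor
  · intro h
    obtain ⟨d, ⟨c, hc, rfl⟩, hle⟩ := h _ (Finset.mem_singleton_self _)
    exact ⟨c, hc, fun i => by simpa [symm_apply] using Finsupp.le_def.mp hle i⟩
  · rintro ⟨c, hc, hle⟩ xi hxi
    rw [Finset.mem_singleton] at hxi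
    subst hxi
    refine ⟨Finsupp.equivFunOnFinite.symm (wsum v c), ⟨c, hc, rfl⟩, ?_⟩
    rw [Finsupp.le_def]
    intro i
    simpa [symm_apply] using hle i

lemma isNormal_iff_arith :
    IsNormalIdeal (monIdeal K v) ↔ ∀ n : ℕ, 1 ≤ n → ∀ a : Fin s → ℕ,
      (∃ p : ℕ, 1 ≤ p ∧ ∃ c : Fin q → ℕ, (∑ j, c j) = n * p ∧ ∀ i, wsum v c i ≤ p * a i) →
      ∃ c : Fin q → ℕ, (∑ j, c j) = n ∧ ∀ i, wsum v c i ≤ a i := by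
  constructor
  · intro h n hn a ⟨p, hp, c, hc, hle⟩
    have hmem : mono K a ∈ intCl ((monIdeal K v) ^ n) := by
      apply Ideal.subset_span
      refine ⟨⟨a, rfl⟩, p, hp, ?_⟩
      rw [mono_pow, ← pow_mul]
      exact (mono_mem_pow_iff K v _ _).mpr ⟨c, hc, fun i => hle i⟩
    rw [h n hn] at hmem
    exact (mono_mem_pow_iff K v _ _).mp hmem
  · intro h n hn
    apply le_antisymm
    · rw [intCl, Ideal.span_le]
      rintro m ⟨⟨a, rfl⟩, p, hp, hmp⟩
      rw [mono_pow, ← pow_mul] at hmp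
      obtain ⟨c, hc, hle⟩ := (mono_mem_pow_iff K v _ _).mp hmp
      exact SetLike.mem_coe.mpr ((mono_mem_pow_iff K v _ _).mpr (h n hn a ⟨p, hp, c, hc, hle⟩))
    · conv_lhs => rw [monIdeal_pow_eq K v n]
      rw [Ideal.span_le]
      rintro _ ⟨d, ⟨c, hc, rfl⟩, rfl⟩
      apply SetLike.mem_coe.mpr
      apply Ideal.subset_span
      refine ⟨⟨wsum v c, rfl⟩, 1, le_refl 1, ?_⟩
      rw [pow_one, pow_one]
      show mono K (wsum v c) ∈ _
      exact (mono_mem_pow_iff K v _ _).mpr ⟨c, hc, fun i => le_refl _⟩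

end IdealPart

section Decode

variable {s q : ℕ} (v : Fin q → Fin s → ℕ)

lemma rees_nonneg (j : Fin s ⊕ Fin q) (k : Fin (s+1)) : 0 ≤ reesGens v j k := by
  rcases j with i | j
  · simp only [reesGens, Sum.elim_inl]
    split <;> simp
  · simp only [reesGens, Sum.elim_inr]
    split <;> positivity

lemma rees_inl_last (i' : Fin s) : reesGens v (Sum.inl i') (Fin.last s) = 0 := by
  simp only [reesGens, Sum.elim_inl, Fin.val_last]
  have : (s : ℕ) ≠ (i' : ℕ) := by have := i'.isLt; omega
  simp [this]

lemma rees_inr_last (j : Fin q) : reesGens v (Sum.inr j) (Fin.last s) = 1 := by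
  simp [reesGens, Fin.val_last]

lemma rees_inl_cast (i' i : Fin s) :
    reesGens v (Sum.inl i') i.castSucc = if i = i' then 1 else 0 := by
  simp only [reesGens, Sum.elim_inl, Fin.coe_castSucc]
  by_cases h : i = i'
  · simp [h]
  · have : (i : ℕ) ≠ (i' : ℕ) := fun hh => h (Fin.val_inj.mp hh)
    simp [h, this]

lemma rees_inr_cast (j : Fin q) (i : Fin s) :
    reesGens v (Sum.inr j) i.castSucc = v j i := by
  simp only [reesGens, Sum.elim_inr, Fin.coe_castSucc]
  rw [dif_pos i.isLt]

lemma decode_last_int (f : (Fin s ⊕ Fin q) → ℤ) :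
    ∑ j, f j * reesGens v j (Fin.last s) = ∑ j : Fin q, f (Sum.inr j) := by
  rw [Fintype.sum_sum_type]
  simp [rees_inl_last, rees_inr_last]

lemma decode_cast_int (f : (Fin s ⊕ Fin q) → ℤ) (i : Fin s) :
    ∑ j, f j * reesGens v j i.castSucc
      = f (Sum.inl i) + ∑ j : Fin q, f (Sum.inr j) * (v j i : ℤ) := by
  rw [Fintype.sum_sum_type]
  congr 1
  simp only [rees_inl_cast, mul_ite, mul_one, mul_zero]
  rw [Finset.sum_ite_eq Finset.univ i (fun i' => f (Sum.inl i'))]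
  simp
  congr 1
  funext j
  rw [rees_inr_cast]

lemma decode_last_real (f : (Fin s ⊕ Fin q) → ℝ) :
    ∑ j, f j * (reesGens v j (Fin.last s) : ℝ) = ∑ j : Fin q, f (Sum.inr j) := by
  rw [Fintype.sum_sum_type]
  simp [rees_inl_last, rees_inr_last]

lemma decode_cast_real (f : (Fin s ⊕ Fin q) → ℝ) (i : Fin s) :
    ∑ j, f j * (reesGens v j i.castSucc : ℝ)
      = f (Sum.inl i) + ∑ j : Fin q, f (Sum.inr j) * ((v j i : ℤ) : ℝ) := by
  rw [Fintype.sum_sum_type]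
  congr 1
  · simp only [rees_inl_cast]
    push_cast
    simp only [mul_ite, mul_one, mul_zero]
    rw [Finset.sum_ite_eq Finset.univ i (fun i' => f (Sum.inl i'))]
    simp
  · congr 1
    funext j
    rw [rees_inr_cast]

end Decode

theorem normal_iff_hilbert_basis
    (K : Type*) [Field K] {s q : ℕ} (v : Fin q → Fin s → ℕ) :
    IsNormalIdeal (monIdeal K v) ↔
      ∀ x : Fin (s + 1) → ℤ,
        (∃ c : (Fin s ⊕ Fin q) → ℝ, (∀ j, 0 ≤ c j) ∧
            ∀ k, (x k : ℝ) = ∑ j, c j * (reesGens v j k : ℝ)) ↔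
        (∃ c : (Fin s ⊕ Fin q) → ℕ, ∀ k, x k = ∑ j, (c j : ℤ) * reesGens v j k) := by
  rw [isNormal_iff_arith K v]
  constructor
  · -- arith normality → Hilbert basis
    intro h x
    constructor
    · rintro ⟨c, hc0, hcx⟩
      have hx0 : ∀ k, 0 ≤ x k := by
        intro k
        have h1 : (0:ℝ) ≤ (x k : ℝ) := by
          rw [hcx k]
          apply Finset.sum_nonneg
          intro j _
          have h2 : (0:ℝ) ≤ (reesGens v j k : ℝ) := by exact_mod_cast rees_nonneg v j k
          exact mul_nonneg (hc0 j) h2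
        exact_mod_cast h1
      obtain ⟨p, hp, cc, hcc⟩ := ratSolve (reesGens v) x c hc0 hcx
      set n : ℕ := (x (Fin.last s)).toNat with hn
      set a : Fin s → ℕ := fun i => (x i.castSucc).toNat with ha
      have hnx : (n:ℤ) = x (Fin.last s) := Int.toNat_of_nonneg (hx0 _)
      have hax : ∀ i, ((a i : ℤ)) = x i.castSucc := fun i => Int.toNat_of_nonneg (hx0 _)
      have hP3 : ∃ p : ℕ, 1 ≤ p ∧ ∃ d : Fin q → ℕ, (∑ j, d j) = n * p ∧
          ∀ i, wsum v d i ≤ p * a i := by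
        refine ⟨p, hp, fun j => cc (Sum.inr j), ?_, ?_⟩
        · have hL := hcc (Fin.last s)
          rw [decode_last_int] at hL
          have hcast : ((∑ j, cc (Sum.inr j) : ℕ) : ℤ) = ((n * p : ℕ) : ℤ) := by
            push_cast
            rw [← hL, ← hnx]
            ring
          exact_mod_cast hcast
        · intro i
          have hi := hcc i.castSucc
          rw [decode_cast_int] at hi
          have hle : ((wsum v (fun j => cc (Sum.inr j)) i : ℕ) : ℤ) ≤ ((p * a i : ℕ):ℤ) := by
            simp only [wsum]
            push_cast
            rw [hax i]
            have hnn : (0:ℤ) ≤ (cc (Sum.inl i) : ℤ) := Int.ofNat_nonneg _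
            linarith [hi]
          exact_mod_cast hle
      have hP1 : ∃ d : Fin q → ℕ, (∑ j, d j) = n ∧ ∀ i, wsum v d i ≤ a i := by
        rcases Nat.eq_zero_or_pos n with h0 | hpos
        · exact ⟨0, by simp [h0], fun i => by simp [wsum]⟩
        · exact h n hpos a hP3
      obtain ⟨d, hdsum, hdle⟩ := hP1
      refine ⟨Sum.elim (fun i => a i - wsum v d i) d, ?_⟩
      intro k
      induction k using Fin.lastCases with
      | last =>
        rw [decode_last_int, ← hnx, ← hdsum]
        push_cast
        simp
      | cast i =>
        rw [decode_cast_int, ← hax i]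
        simp only [Sum.elim_inl, Sum.elim_inr]
        have h1 : (a i - wsum v d i) + wsum v d i = a i := Nat.sub_add_cancel (hdle i)
        have h2 : (∑ j, (d j:ℤ) * ((v j i : ℕ):ℤ)) = ((wsum v d i : ℕ) : ℤ) := by
          simp only [wsum]
          push_cast
          rfl
        rw [h2, ← Nat.cast_add, h1]
    · rintro ⟨c, hcx⟩
      refine ⟨fun j => (c j : ℝ), fun j => by positivity, ?_⟩
      intro k
      rw [show ((x k : ℤ):ℝ) = (((∑ j, (c j : ℤ) * reesGens v j k : ℤ)):ℝ) by
        exact_mod_cast congrArg (fun z : ℤ => (z:ℝ)) (hcx k)]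
      push_cast
      rfl
  · -- Hilbert basis → arith normality
    intro hhb n hn a ⟨p, hp, c, hcsum, hcle⟩
    set x : Fin (s+1) → ℤ := Fin.snoc (fun i => (a i : ℤ)) (n : ℤ) with hx
    have hppos : (0:ℝ) < p := by exact_mod_cast hp
    have hreal : ∃ cr : (Fin s ⊕ Fin q) → ℝ, (∀ j, 0 ≤ cr j) ∧
        ∀ k, (x k : ℝ) = ∑ j, cr j * (reesGens v j k : ℝ) := by
      refine ⟨Sum.elim (fun i => (a i : ℝ) - ∑ j, ((c j : ℝ)/p) * (v j i : ℝ))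
        (fun j => (c j : ℝ)/p), ?_, ?_⟩
      · intro j
        rcases j with i | j
        · simp only [Sum.elim_inl, sub_nonneg]
          have hsum : (∑ j, ((c j:ℝ)/p) * (v j i:ℝ)) = ((wsum v c i : ℕ):ℝ)/p := by
            simp only [wsum]
            push_cast
            rw [Finset.sum_div]
            apply Finset.sum_congr rfl
            intro j _
            ring
          rw [hsum, div_le_iff₀ hppos]
          have hc1 : ((wsum v c i:ℕ):ℝ) ≤ ((p * a i : ℕ):ℝ) := by exact_mod_cast hcle i
          push_cast at hc1
          linarith
        · simp only [Sum.elim_inr]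
          positivity
      · intro k
        induction k using Fin.lastCases with
        | last =>
          rw [decode_last_real]
          simp only [Sum.elim_inr, hx, Fin.snoc_last]
          rw [← Finset.sum_div, eq_div_iff hppos.ne']
          have : ((∑ j, c j : ℕ):ℝ) = ((n * p : ℕ):ℝ) := by exact_mod_cast congrArg (Nat.cast : ℕ → ℝ) hcsum
          push_cast at this
          push_cast
          linarith
        | cast i =>
          rw [decode_cast_real]
          simp only [Sum.elim_inl, Sum.elim_inr, hx, Fin.snoc_castSucc]
          push_cast
          ring
    obtain ⟨cc, hcc⟩ := (hhb x).mp hreal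
    refine ⟨fun j => cc (Sum.inr j), ?_, ?_⟩
    · have hL := hcc (Fin.last s)
      rw [decode_last_int] at hL
      simp only [hx, Fin.snoc_last] at hL
      exact_mod_cast hL.symm
    · intro i
      have hi := hcc i.castSucc
      rw [decode_cast_int] at hi
      simp only [hx, Fin.snoc_castSucc] at hi
      have hle : ((wsum v (fun j => cc (Sum.inr j)) i : ℕ):ℤ) ≤ ((a i:ℕ):ℤ) := by
        simp only [wsum]
        push_cast
        have hnn : (0:ℤ) ≤ (cc (Sum.inl i) : ℤ) := Int.ofNat_nonneg _
        linarith [hi]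
      exact_mod_cast hle
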